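/- Every ordering of the 4-cycle contains every 1-ordering of the 4-path: for any four distinct elements v1,v2,v3,v4 of a linear order (forming the 4-cycle with edge set E = {{v1,v2},{v2,v3},{v3,v4},{v4,v1}}), and any i,l ∈ {1,2,3,4}, there exists a sequence x1,x2,x3,x4 of the four elements (each used exactly once) such that each of {x1,x2},{x2,x3},{x3,x4} belongs to E and x_i is the l-th smallest of the four elements. -/

import Mathlib

/-- Every ordering of the 4-cycle contains every 1-ordering of the 4-path: for any four
distinct elements `v1, v2, v3, v4` of a linear order, forming the 4-cycle with edge set
`E = {{v1,v2},{v2,v3},{v3,v4},{v4,v1}}`, and any `i, l ∈ {1,2,3,4}`, there is a sequence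
`x 0, x 1, x 2, x 3` using each of the four elements exactly once, such that each of the
pairs `{x 0, x 1}, {x 1, x 2}, {x 2, x 3}` belongs to `E` and the `(i-1)`-indexed vertex is
the `l`-th smallest of the four (exactly `l - 1` of the chosen elements are smaller). -/
theorem cycle4_contains_all_one_orderings_of_P4
    {α : Type*} [LinearOrder α] (v1 v2 v3 v4 : α)
    (h12 : v1 ≠ v2) (h13 : v1 ≠ v3) (h14 : v1 ≠ v4)
    (h23 : v2 ≠ v3) (h24 : v2 ≠ v4) (h34 : v3 ≠ v4)
    (i l : ℕ) (hi : 1 ≤ i) (hi' : i ≤ 4) (hl : 1 ≤ l) (hl' : l ≤ 4) :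
    ∃ x : Fin 4 → α, Function.Injective x ∧
      (∀ j, x j ∈ ({v1, v2, v3, v4} : Set α)) ∧
      (∀ (j : ℕ) (h : j + 1 < 4),
        s(x ⟨j, by omega⟩, x ⟨j + 1, h⟩) ∈
          ({s(v1, v2), s(v2, v3), s(v3, v4), s(v4, v1)} : Set (Sym2 α))) ∧
      (Finset.univ.filter fun k => x k < x ⟨i - 1, by omega⟩).card = l - 1 := by
  set v : Fin 4 → α := ![v1, v2, v3, v4] with hv
  have hinj : Function.Injective v := by
    intro a b hab
    fin_cases a <;> fin_cases b <;> simp_all [v]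
  set R : Fin 4 → ℕ := fun k => (Finset.univ.filter fun m => v m < v k).card with hR
  have hRlt : ∀ k, R k < 4 := by
    intro k
    have hsub : (Finset.univ.filter fun m => v m < v k) ⊆ Finset.univ.erase k := by
      intro m hm
      simp only [Finset.mem_filter] at hm
      refine Finset.mem_erase.mpr ⟨?_, Finset.mem_univ m⟩
      rintro rfl; exact lt_irrefl _ hm.2
    have := Finset.card_le_card hsub
    simpa using this.trans_lt (by simp)
  have hRinj : Function.Injective (fun k => (⟨R k, hRlt k⟩ : Fin 4)) := by
    intro a b hab
    simp only [Fin.mk.injEq] at hab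
    by_contra hne
    rcases lt_or_gt_of_ne (fun h : v a = v b => hne (hinj h)) with h | h
    · have hsub : (Finset.univ.filter fun m => v m < v a) ⊂ Finset.univ.filter fun m => v m < v b := by
        refine Finset.ssubset_iff_of_subset ?_ |>.mpr ⟨a, by simp [h], by simp⟩
        intro m hm
        simp only [Finset.mem_filter] at hm ⊢
        exact ⟨hm.1, hm.2.trans h⟩
      exact absurd hab (Finset.card_lt_card hsub).ne
    · have hsub : (Finset.univ.filter fun m => v m < v b) ⊂ Finset.univ.filter fun m => v m < v a := by
        refine Finset.ssubset_iff_of_subset ?_ |>.mpr ⟨b, by simp [h], by simp⟩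
        intro m hm
        simp only [Finset.mem_filter] at hm ⊢
        exact ⟨hm.1, hm.2.trans h⟩
      exact absurd hab.symm (Finset.card_lt_card hsub).ne
  have hRsurj := Finite.injective_iff_surjective.mp hRinj
  obtain ⟨j, hj⟩ := hRsurj ⟨l - 1, by omega⟩
  simp only [Fin.mk.injEq] at hj
  set t : Fin 4 := j - ⟨i - 1, by omega⟩ with ht
  refine ⟨fun k => v (k + t), hinj.comp (add_left_injective t), ?_, ?_, ?_⟩
  · intro m
    have : ∀ a : Fin 4, v a ∈ ({v1, v2, v3, v4} : Set α) := by
      intro a; fin_cases a <;> simp [v]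
    exact this _
  · intro jj h
    have hedge : ∀ a : Fin 4, s(v a, v (a + 1)) ∈
        ({s(v1, v2), s(v2, v3), s(v3, v4), s(v4, v1)} : Set (Sym2 α)) := by
      intro a; fin_cases a <;> simp [v]
    have h1 : ∀ (p : jj < 4), (⟨jj + 1, h⟩ : Fin 4) + t = (⟨jj, p⟩ + t) + 1 := by
      intro p
      have : (⟨jj + 1, h⟩ : Fin 4) = ⟨jj, p⟩ + 1 := by
        simp [Fin.ext_iff, Fin.add_def, Nat.mod_eq_of_lt h]
      rw [this]; abel
    simp only []
    rw [h1 (by omega)]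
    exact hedge _
  · have hvj : ∀ (p : i - 1 < 4), v ((⟨i - 1, p⟩ : Fin 4) + t) = v j := by
      intro p
      congr 1
      rw [ht]
      have : (⟨i - 1, p⟩ : Fin 4) = ⟨i - 1, by omega⟩ := rfl
      abel
    simp only []
    simp only [hvj]
    rw [← hj]
    apply Finset.card_bij (fun k _ => k + t)
    · intro k hk
      simp only [Finset.mem_filter, Finset.mem_univ, true_and] at hk ⊢
      exact hk
    · intro a _ b _ hab
      exact add_left_injective t hab
    · intro m hm
      refine ⟨m - t, ?_, by abel⟩
      simp only [Finset.mem_filter, Finset.mem_univ, true_and] at hm ⊢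
      rw [sub_add_cancel]
      exact hm
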